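/- Let (τ_n)_{n≥1} be a positive sequence of real numbers. Suppose that either liminf_{n→∞} τ_n > 0, or both of the following hold: (a) liminf_{n→∞} n·τ_n > 0, and (b) there is a constant C ∈ (0,∞) such that for each integer n ≥ 0, if 2^{n−1} ≤ k < 2^n then C·τ_{2^{n−1}} ≥ τ_k ≥ C^{−1}·τ_{2^n}. Then (τ_n) satisfies Condition A. -/
import Mathlib


open Filter Topology

/-- A positive sequence `τ` (indexed from 1) satisfies Condition A provided that for every
positive decreasing sequence `c` such that `∑_{n=1}^∞ τ_n · min(n·c_n, 1)` converges,
the series `∑_{n=1}^∞ τ_n · n · c_n` also converges. -/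
def ConditionA (τ : ℕ → ℝ) : Prop :=
  ∀ c : ℕ → ℝ, (∀ n, 1 ≤ n → 0 ≤ c n) → (∀ m n, 1 ≤ m → m ≤ n → c n ≤ c m) →
    Summable (fun n : ℕ => τ (n + 1) * min ((n + 1 : ℝ) * c (n + 1)) 1) →
    Summable (fun n : ℕ => τ (n + 1) * ((n + 1 : ℝ) * c (n + 1)))

theorem stmt0 (τ : ℕ → ℝ) (hτ : ∀ n, 1 ≤ n → 0 ≤ τ n)
    (h : 0 < atTop.liminf τ ∨
      ((0 < atTop.liminf (fun n : ℕ => (n : ℝ) * τ n)) ∧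
       ∃ C : ℝ, 0 < C ∧ ∀ n k : ℕ, 2 ^ (n - 1) ≤ k → k < 2 ^ n →
         τ k ≤ C * τ (2 ^ (n - 1)) ∧ C⁻¹ * τ (2 ^ n) ≤ τ k)) :
    ConditionA τ := by
  intro c hc hmono hsum
  set f : ℕ → ℝ := fun n => τ (n + 1) * min ((n + 1 : ℝ) * c (n + 1)) 1 with hfdef
  have hf0 : ∀ n, 0 ≤ f n := fun n =>
    mul_nonneg (hτ _ (Nat.le_add_left 1 n))
      (le_min (mul_nonneg (by positivity) (hc _ (Nat.le_add_left 1 n))) one_pos.le)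
  have key : ∀ᶠ n : ℕ in atTop, (n + 1 : ℝ) * c (n + 1) ≤ 1 := by
    rcases h with h1 | ⟨h2, C, hC, hdbl⟩
    · -- Case 1 : liminf τ > 0
      set b := atTop.liminf τ / 2 with hb
      have hb0 : 0 < b := by positivity
      have hbl : b < atTop.liminf τ := by
        rw [hb]; linarith
      have hbdd : atTop.IsBoundedUnder (· ≥ ·) τ :=
        ⟨0, eventually_atTop.2 ⟨1, hτ⟩⟩
      have hev : ∀ᶠ n : ℕ in atTop, b < τ n := eventually_lt_of_lt_liminf hbl hbdd
      obtain ⟨N, hN⟩ := eventually_atTop.1 hev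
      have hten : Tendsto f atTop (𝓝 0) := hsum.tendsto_atTop_zero
      have hup : Tendsto (fun n => b⁻¹ * f n) atTop (𝓝 0) := by
        simpa using hten.const_mul b⁻¹
      have hmin : Tendsto (fun n : ℕ => min (((n : ℝ) + 1) * c (n + 1)) 1) atTop (𝓝 0) := by
        apply tendsto_of_tendsto_of_tendsto_of_le_of_le' tendsto_const_nhds hup
        · exact Eventually.of_forall fun n =>
            le_min (mul_nonneg (by positivity) (hc _ (Nat.le_add_left 1 n))) one_pos.le
        · filter_upwards [eventually_ge_atTop N] with n hn
          have hτn : b < τ (n + 1) := hN (n + 1) (le_trans hn (Nat.le_succ n))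
          have hmn : 0 ≤ min ((n + 1 : ℝ) * c (n + 1)) 1 :=
            le_min (mul_nonneg (by positivity) (hc _ (Nat.le_add_left 1 n))) one_pos.le
          rw [le_inv_mul_iff₀ hb0]
          calc b * min ((n + 1 : ℝ) * c (n + 1)) 1
              ≤ τ (n + 1) * min ((n + 1 : ℝ) * c (n + 1)) 1 :=
                mul_le_mul_of_nonneg_right hτn.le hmn
            _ = f n := rfl
      have hlt := hmin.eventually_lt_const one_pos
      filter_upwards [hlt] with n hn
      by_contra hgt
      push_neg at hgt
      rw [min_eq_right hgt.le] at hn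
      exact lt_irrefl _ hn
    · -- Case 2
      have hbdd : atTop.IsBoundedUnder (· ≥ ·) (fun n : ℕ => (n : ℝ) * τ n) :=
        ⟨0, eventually_atTop.2 ⟨1, fun n hn => mul_nonneg (by positivity) (hτ n hn)⟩⟩
      set δ := atTop.liminf (fun n : ℕ => (n : ℝ) * τ n) / 2 with hδ
      have hδ0 : 0 < δ := by positivity
      have hδl : δ < atTop.liminf (fun n : ℕ => (n : ℝ) * τ n) := by rw [hδ]; linarith
      obtain ⟨N₀, hN₀⟩ := eventually_atTop.1 (eventually_lt_of_lt_liminf hδl hbdd)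
      by_contra hcon
      rw [not_eventually] at hcon
      have htail : Tendsto (fun a => ∑' k, f (k + a)) atTop (𝓝 0) := tendsto_sum_nat_add f
      set ε := C⁻¹ * δ / 8 with hε
      have hε0 : 0 < ε := by positivity
      have hfreq : ∃ᶠ a in atTop, ε ≤ ∑' k, f (k + a) := by
        rw [frequently_atTop]
        intro A
        obtain ⟨n, hn, hn1⟩ := frequently_atTop.1 hcon (4 * (A + N₀ + 2))
        push_neg at hn1
        set n' := n + 1 with hn'
        set L := Nat.log 2 n' with hL
        have h1 : 2 ^ L ≤ n' := Nat.pow_log_le_self 2 (by omega)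
        have h2 : n' < 2 ^ (L + 1) := Nat.lt_pow_succ_log_self (by norm_num) n'
        have hL1 : 1 ≤ L := by
          by_contra hL0
          interval_cases L <;> omega
        have hpowL : 2 ^ L = 2 * 2 ^ (L - 1) := by
          rw [← pow_succ']
          congr 1
          omega
        have hbig : A + N₀ + 2 ≤ 2 ^ (L - 1) := by
          have h4 : 2 ^ (L + 1) = 4 * 2 ^ (L - 1) := by
            rw [pow_succ, hpowL]; ring
          omega
        have hpow1 : 1 ≤ 2 ^ (L - 1) := Nat.one_le_two_pow
        set a := 2 ^ (L - 1) - 1 with ha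
        have ha1 : a + 1 = 2 ^ (L - 1) := by omega
        refine ⟨a, by omega, ?_⟩
        have hsum' : Summable (fun k => f (k + a)) := (summable_nat_add_iff a).2 hsum
        have hτ2L : δ / (2 ^ L : ℝ) ≤ τ (2 ^ L) := by
          have := hN₀ (2 ^ L) (by omega)
          rw [div_le_iff₀ (by positivity)]
          calc δ ≤ ((2 ^ L : ℕ) : ℝ) * τ (2 ^ L) := this.le
            _ = τ (2 ^ L) * (2 ^ L : ℝ) := by push_cast; ring
        have hterm : ∀ k ∈ Finset.range (2 ^ (L - 1)),
            C⁻¹ * (δ / (2 ^ L : ℝ)) * (1 / 4) ≤ f (k + a) := by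
          intro k hk
          rw [Finset.mem_range] at hk
          have hm1 : 2 ^ (L - 1) ≤ k + a + 1 := by omega
          have hm2 : k + a + 1 < 2 ^ L := by omega
          have hτm : C⁻¹ * τ (2 ^ L) ≤ τ (k + a + 1) := (hdbl L (k + a + 1) hm1 hm2).2
          have hτm' : C⁻¹ * (δ / (2 ^ L : ℝ)) ≤ τ (k + a + 1) :=
            le_trans (mul_le_mul_of_nonneg_left hτ2L (by positivity)) hτm
          have hcm : c n' ≤ c (k + a + 1) := hmono (k + a + 1) n' (by omega) (by omega)
          have hcn' : 1 / (n' : ℝ) < c n' := by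
            rw [div_lt_iff₀ (by positivity), mul_comm]
            have hcast : ((n' : ℕ) : ℝ) = (n : ℝ) + 1 := by rw [hn']; push_cast; ring
            rw [hcast]
            exact hn1
          have hmin14 : (1 / 4 : ℝ) ≤ min ((k + a + 1 : ℝ) * c (k + a + 1)) 1 := by
            apply le_min _ (by norm_num)
            have hge : (2 ^ (L - 1) : ℝ) ≤ (k + a + 1 : ℝ) := by
              exact_mod_cast hm1
            have hlt : (n' : ℝ) < (2 ^ (L + 1) : ℝ) := by exact_mod_cast h2
            have hc1 : 1 / (2 ^ (L + 1) : ℝ) ≤ c (k + a + 1) := by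
              refine le_trans (le_trans ?_ hcn'.le) hcm
              apply div_le_div_of_nonneg_left one_pos.le (by positivity) hlt.le
            have h4 : (2 ^ (L + 1) : ℝ) = 4 * (2 ^ (L - 1) : ℝ) := by
              exact_mod_cast (show (2:ℕ) ^ (L + 1) = 4 * 2 ^ (L - 1) by
                rw [pow_succ, hpowL]; ring)
            calc (1 / 4 : ℝ) = (2 ^ (L - 1) : ℝ) * (1 / (2 ^ (L + 1) : ℝ)) := by
                  rw [h4]
                  field_simp
              _ ≤ (k + a + 1 : ℝ) * c (k + a + 1) := by
                  apply mul_le_mul hge hc1 (by positivity) (by positivity)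
          calc C⁻¹ * (δ / (2 ^ L : ℝ)) * (1 / 4)
              ≤ τ (k + a + 1) * min ((k + a + 1 : ℝ) * c (k + a + 1)) 1 := by
                apply mul_le_mul hτm' hmin14 (by norm_num) (hτ _ (by omega))
            _ = f (k + a) := by
                simp only [hfdef]
                norm_num
        calc ε = (2 ^ (L - 1) : ℝ) * (C⁻¹ * (δ / (2 ^ L : ℝ)) * (1 / 4)) := by
              have : (2 ^ L : ℝ) = 2 * (2 ^ (L - 1) : ℝ) := by exact_mod_cast hpowL
              rw [hε, this]
              field_simp
              ring
          _ ≤ ∑ k ∈ Finset.range (2 ^ (L - 1)), f (k + a) := by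
              have := Finset.card_nsmul_le_sum (Finset.range (2 ^ (L - 1)))
                (fun k => f (k + a)) _ hterm
              simpa [nsmul_eq_mul] using this
          _ ≤ ∑' k, f (k + a) := Summable.sum_le_tsum _ (fun i _ => hf0 _) hsum'
      have hev := htail.eventually_lt_const hε0
      obtain ⟨a, hge, hlt⟩ := (hfreq.and_eventually hev).exists
      linarith
  obtain ⟨N, hN⟩ := eventually_atTop.1 key
  rw [← summable_nat_add_iff N] at hsum ⊢
  refine hsum.congr fun i => ?_
  have h1 := hN (i + N) (Nat.le_add_left N i)
  show τ (i + N + 1) * min ((((i + N : ℕ) : ℝ) + 1) * c (i + N + 1)) 1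
      = τ (i + N + 1) * ((((i + N : ℕ) : ℝ) + 1) * c (i + N + 1))
  rw [min_eq_left h1]
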